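/- (Lemma th3.1, main ergodic bound) Let sequences (xᵏ), (yᵏ), (ȳᵏ) be generated by Algorithm 1 (conditions (i)–(iii) at every iteration) with nondecreasing positive stepsizes (τ_k), (λ_k) such that R − τ_kλ_kS⁻¹ is positive definite for every k, and let (x*, y*) be a saddle point of L. Then for every N ≥ 1: L(x̂ᴺ, y*) − L(x*, ŷᴺ) ≤ (1/(2Nτ_N))·[√(τ_N/τ_0)·‖y* − ȳ⁰‖_S + √(τ_N/λ_0)·‖x* − x⁰‖_{AᵀRA} + 2A_N + √(2B_N)]², where A_N = τ_N·Σ_{k=0}^{N−1} √(ε_{k+1}/τ_k) and B_N = τ_N·Σ_{k=0}^{N−1} (2ε_{k+1} + δ_{k+1}). -/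

import Mathlib

open Matrix Finset Filter

/-- squared M-norm: ⟨x, M x⟩ -/
noncomputable def sqnorm {d : ℕ} (M : Matrix (Fin d) (Fin d) ℝ) (x : Fin d → ℝ) : ℝ :=
  x ⬝ᵥ M.mulVec x

/-- M-norm: √⟨x, M x⟩ -/
noncomputable def mnorm {d : ℕ} (M : Matrix (Fin d) (Fin d) ℝ) (x : Fin d → ℝ) : ℝ :=
  Real.sqrt (x ⬝ᵥ M.mulVec x)

/-- The Lagrangian L(x,y) = f(x) + ⟨Ax, y⟩ − g(y). -/
noncomputable def Lag {n m : ℕ} (f : (Fin n → ℝ) → ℝ) (g : (Fin m → ℝ) → ℝ)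
    (A : Matrix (Fin m) (Fin n) ℝ) (x : Fin n → ℝ) (y : Fin m → ℝ) : ℝ :=
  f x + A.mulVec x ⬝ᵥ y - g y

/-- (x*, y*) is a saddle point of L. -/
def IsSaddle {n m : ℕ} (f : (Fin n → ℝ) → ℝ) (g : (Fin m → ℝ) → ℝ)
    (A : Matrix (Fin m) (Fin n) ℝ) (xs : Fin n → ℝ) (ys : Fin m → ℝ) : Prop :=
  ∀ (x : Fin n → ℝ) (y : Fin m → ℝ),
    Lag f g A xs y ≤ Lag f g A xs ys ∧ Lag f g A xs ys ≤ Lag f g A x ys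

namespace MEB
variable {m : ℕ}

lemma bil_symm (M : Matrix (Fin m) (Fin m) ℝ) (hM : Mᵀ = M) (u v : Fin m → ℝ) :
    u ⬝ᵥ M *ᵥ v = v ⬝ᵥ M *ᵥ u := by
  rw [Matrix.dotProduct_mulVec, ← Matrix.mulVec_transpose, hM, dotProduct_comm]

lemma sq_combo (M : Matrix (Fin m) (Fin m) ℝ) (hM : Mᵀ = M) (u v : Fin m → ℝ) (t : ℝ) :
    ((1-t) • u + t • v) ⬝ᵥ M *ᵥ ((1-t) • u + t • v)
      = (1-t) * (u ⬝ᵥ M *ᵥ u) + t * (v ⬝ᵥ M *ᵥ v)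
        - t * (1-t) * ((u - v) ⬝ᵥ M *ᵥ (u - v)) := by
  have h := bil_symm M hM v u
  simp [Matrix.mulVec_add, Matrix.mulVec_sub, Matrix.mulVec_smul, dotProduct_add,
    add_dotProduct, dotProduct_sub, sub_dotProduct, dotProduct_smul, smul_dotProduct,
    smul_eq_mul, h]
  ring

lemma sq_neg (M : Matrix (Fin m) (Fin m) ℝ) (u : Fin m → ℝ) :
    (-u) ⬝ᵥ M *ᵥ (-u) = u ⬝ᵥ M *ᵥ u := by
  simp [Matrix.mulVec_neg, dotProduct_neg, neg_dotProduct]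

lemma le_of_forall_small (a b C : ℝ) (hC : 0 ≤ C)
    (h : ∀ t : ℝ, 0 < t → t ≤ 1 → b - t*C ≤ a) : b ≤ a := by
  by_contra hab
  push_neg at hab
  have hd : 0 < (b-a)/(2*C+1) := div_pos (by linarith) (by linarith)
  have ht0 : 0 < min 1 ((b-a)/(2*C+1)) := lt_min one_pos hd
  have h1 := h _ ht0 (min_le_left _ _)
  have h2 : (min 1 ((b-a)/(2*C+1)))*C ≤ ((b-a)/(2*C+1))*C :=
    mul_le_mul_of_nonneg_right (min_le_right _ _) hC
  have h3 : ((b-a)/(2*C+1))*C < b-a := by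
    rw [div_mul_eq_mul_div, div_lt_iff₀ (by linarith)]
    nlinarith
  linarith

lemma approx_strong (g : (Fin m → ℝ) → ℝ) (hg : ConvexOn ℝ Set.univ g)
    (S : Matrix (Fin m) (Fin m) ℝ) (hS : S.PosDef)
    (c w z : Fin m → ℝ) (τ e : ℝ) (hτ : 0 < τ) (he : 0 ≤ e)
    (hmin : ∀ y, g y - c ⬝ᵥ y + 1/(2*τ) * ((y - w) ⬝ᵥ S *ᵥ (y - w))
            ≥ g z - c ⬝ᵥ z + 1/(2*τ) * ((z - w) ⬝ᵥ S *ᵥ (z - w)) - e)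
    (y : Fin m → ℝ) :
    g y - c ⬝ᵥ y + 1/(2*τ) * ((y - w) ⬝ᵥ S *ᵥ (y - w))
      ≥ g z - c ⬝ᵥ z + 1/(2*τ) * ((z - w) ⬝ᵥ S *ᵥ (z - w))
        + 1/(2*τ) * ((y - z) ⬝ᵥ S *ᵥ (y - z))
        - Real.sqrt (2*e/τ) * Real.sqrt ((y - z) ⬝ᵥ S *ᵥ (y - z)) - e := by
  have hQ0' : 0 ≤ (y - z) ⬝ᵥ S *ᵥ (y - z) := hS.posSemidef.dotProduct_mulVec_nonneg _
  set Fy := g y - c ⬝ᵥ y + 1/(2*τ) * ((y - w) ⬝ᵥ S *ᵥ (y - w)) with hFy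
  set Fz := g z - c ⬝ᵥ z + 1/(2*τ) * ((z - w) ⬝ᵥ S *ᵥ (z - w)) with hFz
  set Q := (y - z) ⬝ᵥ S *ᵥ (y - z) with hQ
  clear_value Fy Fz Q
  have hQ0 : 0 ≤ Q := hQ0'
  -- interpolation inequality
  have interp : ∀ t : ℝ, 0 < t → t ≤ 1 → Fz + (1-t)*(1/(2*τ))*Q - e/t ≤ Fy := by
    intro t ht0 ht1
    set p := (1-t) • z + t • y with hp
    have e1 : g p ≤ (1-t) * g z + t * g y := by
      have := hg.2 (Set.mem_univ z) (Set.mem_univ y) (by linarith : (0:ℝ) ≤ 1 - t)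
        (le_of_lt ht0) (by ring)
      simpa [smul_eq_mul] using this
    have e2 : c ⬝ᵥ p = (1-t)*(c ⬝ᵥ z) + t*(c ⬝ᵥ y) := by
      simp [hp, dotProduct_add, dotProduct_smul, smul_eq_mul]
    have hpw : p - w = (1-t) • (z-w) + t • (y-w) := by
      rw [hp]; module
    have e3 : (p - w) ⬝ᵥ S *ᵥ (p - w)
        = (1-t)*((z-w) ⬝ᵥ S *ᵥ (z-w)) + t*((y-w) ⬝ᵥ S *ᵥ (y-w)) - t*(1-t)*Q := by
      rw [hpw, sq_combo S hS.1]
      have h4 : z - w - (y - w) = -(y - z) := by abel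
      rw [h4, sq_neg, ← hQ]
    have hB := hmin p
    rw [e2, e3] at hB
    have hG : 0 ≤ t*Fy - t*Fz - t*(1-t)*(1/(2*τ))*Q + e := by
      rw [hFy, hFz]
      nlinarith [e1]
    rw [← sub_nonneg]
    have : Fy - (Fz + (1-t)*(1/(2*τ))*Q - e/t)
        = (t*Fy - t*Fz - t*(1-t)*(1/(2*τ))*Q + e)/t := by
      field_simp
      ring
    rw [this]
    positivity
  set d := Real.sqrt Q with hd
  have hd0 : 0 ≤ d := Real.sqrt_nonneg _
  have hdsq : d^2 = Q := Real.sq_sqrt hQ0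
  set s := Real.sqrt (2*e/τ) with hs
  have hs0 : 0 ≤ s := Real.sqrt_nonneg _
  have hssq : s^2 = 2*e/τ := Real.sq_sqrt (by positivity)
  rcases eq_or_lt_of_le he with he0 | he0
  · -- e = 0
    have hs' : s = 0 := by rw [hs, ← he0]; simp
    have key : Fz + 1/(2*τ)*Q ≤ Fy := by
      apply le_of_forall_small Fy (Fz + 1/(2*τ)*Q) (1/(2*τ)*Q) (by positivity)
      intro t ht0 ht1
      have h1 := interp t ht0 ht1
      rw [← he0] at h1
      have : Fz + (1-t)*(1/(2*τ))*Q - 0/t = Fz + 1/(2*τ)*Q - t*(1/(2*τ)*Q) := by ring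
      linarith [this.symm.le, this.le, h1]
    rw [hs'] at *
    rw [ge_iff_le]
    nlinarith [key]
  · -- 0 < e
    have hspos : 0 < s := Real.sqrt_pos.2 (by positivity)
    have hτs2 : (τ*s)^2 = 2*e*τ := by
      rw [mul_pow, hssq]; field_simp
    have hτs : τ*s = Real.sqrt (2*e*τ) := by
      rw [← hτs2, Real.sqrt_sq (by positivity)]
    by_cases hcase : d < Real.sqrt (2*e*τ)
    · -- small distance: use t = 1
      have h1 := interp 1 one_pos le_rfl
      have hd2 : d ≤ τ*s := by rw [hτs]; exact hcase.le
      have h5 : d*d ≤ (τ*s)*d := mul_le_mul_of_nonneg_right hd2 hd0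
      have h6 : 1/(2*τ)*Q ≤ s*d := by
        rw [← hdsq, one_div, inv_mul_eq_div, div_le_iff₀ (by linarith : (0:ℝ) < 2*τ)]
        nlinarith [mul_nonneg (mul_nonneg hs0 hd0) hτ.le]
      have h7 : Fz + (1-1)*(1/(2*τ))*Q - e/1 = Fz - e := by ring
      rw [h7] at h1
      rw [ge_iff_le]
      linarith
    · -- large distance: use t = τ*s/d
      have hdpos : 0 < d := lt_of_lt_of_le (by rw [← hτs]; positivity) (not_lt.1 hcase)
      have ht0 : 0 < τ*s/d := by positivity
      have ht1 : τ*s/d ≤ 1 := by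
        rw [div_le_one hdpos, hτs]; exact not_lt.1 hcase
      have h1 := interp (τ*s/d) ht0 ht1
      have he' : e = τ*s^2/2 := by rw [hssq]; field_simp
      have hexp1 : (1-τ*s/d)*(1/(2*τ))*Q = 1/(2*τ)*Q - s*d/2 := by
        rw [← hdsq]; field_simp
      have hexp2 : e/(τ*s/d) = s*d/2 := by
        rw [he']; field_simp
      rw [hexp1, hexp2] at h1
      rw [ge_iff_le]
      linarith

lemma sq_add (M : Matrix (Fin m) (Fin m) ℝ) (hM : Mᵀ = M) (u v : Fin m → ℝ) :
    (u + v) ⬝ᵥ M *ᵥ (u + v)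
      = u ⬝ᵥ M *ᵥ u + 2 * (u ⬝ᵥ M *ᵥ v) + v ⬝ᵥ M *ᵥ v := by
  have h := bil_symm M hM v u
  simp [Matrix.mulVec_add, dotProduct_add, add_dotProduct, h]
  ring

lemma two_bil (M : Matrix (Fin m) (Fin m) ℝ) (hM : Mᵀ = M) (a b c : Fin m → ℝ) :
    2*((a - b) ⬝ᵥ M *ᵥ (c - b))
      = (a-b) ⬝ᵥ M *ᵥ (a-b) + (c-b) ⬝ᵥ M *ᵥ (c-b) - (c-a) ⬝ᵥ M *ᵥ (c-a) := by
  have hab := bil_symm M hM a b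
  have hac := bil_symm M hM a c
  have hbc := bil_symm M hM b c
  simp only [Matrix.mulVec_sub, dotProduct_sub, sub_dotProduct, hab, hac, hbc]
  ring

lemma mulVec_sum' {k : ℕ} (A : Matrix (Fin k) (Fin m) ℝ) (N : ℕ) (v : ℕ → Fin m → ℝ) :
    A *ᵥ (∑ i ∈ Finset.range N, v i) = ∑ i ∈ Finset.range N, A *ᵥ (v i) := by
  induction N with
  | zero => simp
  | succ n ih => rw [Finset.sum_range_succ, Finset.sum_range_succ, Matrix.mulVec_add, ih]

lemma dot_sum_left (u : Fin m → ℝ) (N : ℕ) (v : ℕ → Fin m → ℝ) :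
    (∑ i ∈ Finset.range N, v i) ⬝ᵥ u = ∑ i ∈ Finset.range N, (v i) ⬝ᵥ u := by
  induction N with
  | zero => simp
  | succ n ih => rw [Finset.sum_range_succ, Finset.sum_range_succ, add_dotProduct, ih]

lemma dot_sum_right (u : Fin m → ℝ) (N : ℕ) (v : ℕ → Fin m → ℝ) :
    u ⬝ᵥ (∑ i ∈ Finset.range N, v i) = ∑ i ∈ Finset.range N, u ⬝ᵥ (v i) := by
  induction N with
  | zero => simp
  | succ n ih => rw [Finset.sum_range_succ, Finset.sum_range_succ, dotProduct_add, ih]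


-- Young + PD comparison
lemma young (S R : Matrix (Fin m) (Fin m) ℝ) (hS : S.PosDef)
    (τ lam : ℝ) (hτ : 0 < τ) (hlam : 0 < lam)
    (hPD : (R - (τ * lam) • S⁻¹).PosDef) (u v : Fin m → ℝ) :
    u ⬝ᵥ v ≤ 1/(2*τ) * (u ⬝ᵥ S *ᵥ u) + 1/(2*lam) * (v ⬝ᵥ R *ᵥ v) := by
  have hSdet : IsUnit S.det := isUnit_iff_ne_zero.2 (ne_of_gt hS.det_pos)
  have hSiv : S *ᵥ (S⁻¹ *ᵥ v) = v := by
    rw [Matrix.mulVec_mulVec, Matrix.mul_nonsing_inv _ hSdet, Matrix.one_mulVec]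
  have h1 : 0 ≤ (u - τ • (S⁻¹ *ᵥ v)) ⬝ᵥ S *ᵥ (u - τ • (S⁻¹ *ᵥ v)) := hS.posSemidef.dotProduct_mulVec_nonneg _
  have hexp : (u - τ • (S⁻¹ *ᵥ v)) ⬝ᵥ S *ᵥ (u - τ • (S⁻¹ *ᵥ v))
      = u ⬝ᵥ S *ᵥ u - 2*τ*(u ⬝ᵥ v) + τ^2 * (v ⬝ᵥ S⁻¹ *ᵥ v) := by
    have hsymm : (S⁻¹ *ᵥ v) ⬝ᵥ S *ᵥ u = u ⬝ᵥ S *ᵥ (S⁻¹ *ᵥ v) := bil_symm S hS.1 _ u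
    have hdc : (S⁻¹ *ᵥ v) ⬝ᵥ v = v ⬝ᵥ S⁻¹ *ᵥ v := dotProduct_comm _ _
    simp [Matrix.mulVec_sub, Matrix.mulVec_smul, dotProduct_sub, sub_dotProduct,
      dotProduct_smul, smul_dotProduct, smul_eq_mul, hSiv, hsymm, hdc]
    ring
  have h2 : 0 ≤ v ⬝ᵥ R *ᵥ v - (τ*lam) * (v ⬝ᵥ S⁻¹ *ᵥ v) := by
    have := (hPD).posSemidef.dotProduct_mulVec_nonneg v
    simpa [Matrix.sub_mulVec, Matrix.smul_mulVec, dotProduct_sub, dotProduct_smul,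
      smul_eq_mul] using this
  have h3 : 0 ≤ v ⬝ᵥ S⁻¹ *ᵥ v := (hS.inv).posSemidef.dotProduct_mulVec_nonneg v
  rw [hexp] at h1
  have key : 2*τ*(u ⬝ᵥ v) ≤ u ⬝ᵥ S *ᵥ u + τ^2 * (v ⬝ᵥ S⁻¹ *ᵥ v) := by linarith
  have key2 : τ^2 * (v ⬝ᵥ S⁻¹ *ᵥ v) ≤ (τ/lam) * (v ⬝ᵥ R *ᵥ v) := by
    rw [div_mul_eq_mul_div, le_div_iff₀ hlam]
    nlinarith
  have h5 : u ⬝ᵥ v ≤ (u ⬝ᵥ S *ᵥ u + (τ/lam) * (v ⬝ᵥ R *ᵥ v))/(2*τ) := by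
    rw [le_div_iff₀ (by positivity)]
    nlinarith
  have h6 : (u ⬝ᵥ S *ᵥ u + (τ/lam) * (v ⬝ᵥ R *ᵥ v))/(2*τ)
      = 1/(2*τ) * (u ⬝ᵥ S *ᵥ u) + 1/(2*lam) * (v ⬝ᵥ R *ᵥ v) := by
    field_simp
  linarith [h5, h6.le, h6.ge]

lemma abel_bound (c v : ℕ → ℝ) (hmono : ∀ j k : ℕ, j ≤ k → c k ≤ c j)
    (hv : ∀ k, 0 ≤ v k) :
    ∀ M : ℕ, (∑ k ∈ Finset.range (M+1), c k * (v k - v (k+1))) + c M * v (M+1) ≤ c 0 * v 0 := by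
  intro M
  induction M with
  | zero => simp [Finset.sum_range_one]; ring_nf; exact le_rfl
  | succ M ih =>
      rw [Finset.sum_range_succ]
      have h1 : c (M+1) * v (M+1) ≤ c M * v (M+1) :=
        mul_le_mul_of_nonneg_right (hmono M (M+1) (by omega)) (hv _)
      linarith

lemma recursion_bound (u lamb : ℕ → ℝ) (hu : ∀ k, 0 ≤ u k) (hl : ∀ k, 0 ≤ lamb k)
    (Stil : ℝ) (hSt : 0 ≤ Stil) (N : ℕ)
    (hrec : ∀ M, M ≤ N → u M ^ 2 ≤ Stil + ∑ k ∈ Finset.range M, lamb (k+1) * u (k+1)) :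
    ∀ M, M ≤ N → u M ≤ (∑ k ∈ Finset.range N, lamb (k+1)) + Real.sqrt Stil := by
  intro M
  induction M using Nat.strong_induction_on with
  | _ M ih =>
    intro hMN
    set Λ := ∑ k ∈ Finset.range N, lamb (k+1) with hΛ
    have hΛ0 : 0 ≤ Λ := Finset.sum_nonneg (fun i _ => hl _)
    by_contra hgt
    push_neg at hgt
    have hsq0 : 0 ≤ Real.sqrt Stil := Real.sqrt_nonneg _
    have hBpos : 0 < u M := lt_of_le_of_lt (by linarith) hgt
    have hsum : ∑ k ∈ Finset.range M, lamb (k+1) * u (k+1)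
        ≤ (∑ k ∈ Finset.range M, lamb (k+1)) * u M := by
      rw [Finset.sum_mul]
      apply Finset.sum_le_sum
      intro i hi
      apply mul_le_mul_of_nonneg_left _ (hl _)
      rcases lt_or_eq_of_le (Nat.succ_le_of_lt (Finset.mem_range.1 hi)) with h | h
      · exact le_trans (ih (i+1) h (by omega)) (le_of_lt hgt)
      · exact le_of_eq (congrArg u h)
    have hsum2 : (∑ k ∈ Finset.range M, lamb (k+1)) * u M ≤ Λ * u M := by
      apply mul_le_mul_of_nonneg_right _ (le_of_lt hBpos)
      rw [hΛ]
      apply Finset.sum_le_sum_of_subset_of_nonneg (Finset.range_subset_range.2 hMN)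
      intro i _ _; exact hl _
    have h1 := hrec M hMN
    have h2 : u M ^ 2 ≤ Stil + Λ * u M := by linarith
    nlinarith [Real.sq_sqrt hSt, mul_le_mul_of_nonneg_left (le_of_lt hgt) hΛ0]


lemma periter {n : ℕ}
    (f : (Fin n → ℝ) → ℝ) (g : (Fin m → ℝ) → ℝ)
    (hg : ConvexOn ℝ Set.univ g)
    (A : Matrix (Fin m) (Fin n) ℝ)
    (S R : Matrix (Fin m) (Fin m) ℝ) (hS : S.PosDef) (hR : R.PosDef)
    (τ lam : ℕ → ℝ) (hτpos : ∀ k, 0 < τ k) (hlampos : ∀ k, 0 < lam k)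
    (hPD : ∀ k, (R - (τ k * lam k) • S⁻¹).PosDef)
    (ε δ : ℕ → ℝ) (hεnn : ∀ k, 0 ≤ ε k)
    (xseq : ℕ → Fin n → ℝ) (yseq ybar : ℕ → Fin m → ℝ)
    (hi : ∀ k, ∀ y, g y ≥ g (yseq (k+1)) +
        ((1 / τ k) • S.mulVec (ybar k - yseq (k+1)) + A.mulVec (xseq k)) ⬝ᵥ
          (y - yseq (k+1)) - ε (k+1) / 2)
    (hii : ∀ k, ∀ x, f x + A.mulVec x ⬝ᵥ yseq (k+1)
        ≥ f (xseq (k+1)) + A.mulVec (xseq (k+1)) ⬝ᵥ yseq (k+1)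
          + ((1 / lam k) • (Aᵀ * R * A).mulVec (xseq k - xseq (k+1))) ⬝ᵥ
              (x - xseq (k+1)) - δ (k+1))
    (hiii : ∀ k, ∀ y, g y - A.mulVec (xseq (k+1)) ⬝ᵥ y
          + (1 / (2 * τ k)) * sqnorm S (y - ybar k)
        ≥ g (ybar (k+1)) - A.mulVec (xseq (k+1)) ⬝ᵥ ybar (k+1)
          + (1 / (2 * τ k)) * sqnorm S (ybar (k+1) - ybar k) - ε (k+1) / 2)
    (xstar : Fin n → ℝ) (ystar : Fin m → ℝ) (k : ℕ) :
    Lag f g A (xseq (k+1)) ystar - Lag f g A xstar (yseq (k+1))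
      ≤ 1/(2*τ k) * ((ystar - ybar k) ⬝ᵥ S *ᵥ (ystar - ybar k)
                     - (ystar - ybar (k+1)) ⬝ᵥ S *ᵥ (ystar - ybar (k+1)))
        + 1/(2*lam k) * ((A *ᵥ xstar - A *ᵥ xseq k) ⬝ᵥ R *ᵥ (A *ᵥ xstar - A *ᵥ xseq k)
                     - (A *ᵥ xstar - A *ᵥ xseq (k+1)) ⬝ᵥ R *ᵥ (A *ᵥ xstar - A *ᵥ xseq (k+1)))
        + Real.sqrt (ε (k+1) / τ k)
            * Real.sqrt ((ystar - ybar (k+1)) ⬝ᵥ S *ᵥ (ystar - ybar (k+1)))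
        + (ε (k+1) + δ (k+1)) := by
  set yp := yseq (k+1) with hyp
  set zb := ybar (k+1) with hzb
  set yb := ybar k with hyb
  set xp := xseq (k+1) with hxp
  set xk := xseq k with hxk
  set a := A *ᵥ xk with ha
  set b := A *ᵥ xp with hb
  set cc := A *ᵥ xstar with hcc
  have hτk := hτpos k
  have hlk := hlampos k
  have hc : ∀ u v : Fin m → ℝ, (R *ᵥ u) ⬝ᵥ v = u ⬝ᵥ R *ᵥ v := fun u v => by
    rw [dotProduct_comm]; exact bil_symm R hR.1 v u
  -- Step 1: primal inequality
  have hF := hii k xstar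
  simp only [← hxp, ← hxk, ← hyp] at hF
  simp only [← ha, ← hb, ← hcc] at hF
  have htriple : ((Aᵀ * R * A) *ᵥ (xk - xp)) ⬝ᵥ (xstar - xp)
      = (a - b) ⬝ᵥ R *ᵥ (cc - b) := by
    have e1 : ((Aᵀ * R * A) *ᵥ (xk - xp)) ⬝ᵥ (xstar - xp)
        = (R *ᵥ (A *ᵥ (xk - xp))) ⬝ᵥ (A *ᵥ (xstar - xp)) := by
      rw [Matrix.mul_assoc, ← Matrix.mulVec_mulVec, Matrix.mulVec_transpose,
        ← Matrix.dotProduct_mulVec, ← Matrix.mulVec_mulVec]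
    rw [e1]
    simp only [Matrix.mulVec_sub, ← ha, ← hb, ← hcc, sub_dotProduct, dotProduct_sub, hc]
  simp only [smul_dotProduct, smul_eq_mul] at hF
  rw [htriple] at hF
  have h2bil : (1/(lam k)) * ((a - b) ⬝ᵥ R *ᵥ (cc - b))
      = 1/(2*lam k) * ((a-b) ⬝ᵥ R *ᵥ (a-b) + (cc-b) ⬝ᵥ R *ᵥ (cc-b)
          - (cc-a) ⬝ᵥ R *ᵥ (cc-a)) := by
    rw [← two_bil R hR.1 a b cc]
    ring
  -- Step 2: hP1
  have hi' := hi k zb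
  simp only [← hxp, ← hxk, ← hyp, ← hzb, ← hyb] at hi'
  simp only [← ha, ← hb, ← hcc] at hi'
  simp only [add_dotProduct, smul_dotProduct, smul_eq_mul] at hi'
  have hswap : (S *ᵥ (yb - yp)) ⬝ᵥ (zb - yp) = -((zb - yp) ⬝ᵥ S *ᵥ (yp - yb)) := by
    rw [dotProduct_comm, show yb - yp = -(yp - yb) from (neg_sub yp yb).symm,
      Matrix.mulVec_neg, dotProduct_neg]
  rw [hswap] at hi'
  rw [show a ⬝ᵥ (zb - yp) = a ⬝ᵥ zb - a ⬝ᵥ yp from dotProduct_sub a zb yp] at hi'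
  have hsq : (zb - yb) ⬝ᵥ S *ᵥ (zb - yb)
      = (zb-yp) ⬝ᵥ S *ᵥ (zb-yp) + 2*((zb-yp) ⬝ᵥ S *ᵥ (yp-yb))
        + (yp-yb) ⬝ᵥ S *ᵥ (yp-yb) := by
    rw [show zb - yb = (zb - yp) + (yp - yb) by abel, sq_add S hS.1]
  have hsqs : 1/(2*τ k) * ((zb - yb) ⬝ᵥ S *ᵥ (zb - yb))
      = 1/(2*τ k) * ((zb-yp) ⬝ᵥ S *ᵥ (zb-yp))
        + 1/(2*τ k) * ((yp-yb) ⬝ᵥ S *ᵥ (yp-yb))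
        + (1/τ k) * ((zb-yp) ⬝ᵥ S *ᵥ (yp-yb)) := by
    rw [hsq]; ring
  have hP1 : g zb - a ⬝ᵥ zb + 1/(2*τ k) * ((zb - yb) ⬝ᵥ S *ᵥ (zb - yb))
      ≥ g yp - a ⬝ᵥ yp + 1/(2*τ k) * ((yp - yb) ⬝ᵥ S *ᵥ (yp - yb))
        + 1/(2*τ k) * ((zb - yp) ⬝ᵥ S *ᵥ (zb - yp)) - ε (k+1)/2 := by
    linarith [hi', hsqs]
  -- Step 3: approx_strong at ystar
  have hmin : ∀ y, g y - b ⬝ᵥ y + 1/(2*τ k) * ((y - yb) ⬝ᵥ S *ᵥ (y - yb))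
      ≥ g zb - b ⬝ᵥ zb + 1/(2*τ k) * ((zb - yb) ⬝ᵥ S *ᵥ (zb - yb)) - ε (k+1)/2 := by
    intro y
    have := hiii k y
    simp only [sqnorm, ← hxp, ← hzb, ← hyb] at this
    simp only [← hb] at this
    linarith [this]
  have hstar := approx_strong g hg S hS b yb zb (τ k) (ε (k+1)/2) hτk
    (by linarith [hεnn (k+1)]) hmin ystar
  rw [show 2*(ε (k+1)/2)/τ k = ε (k+1)/τ k by ring] at hstar
  -- Step 4: hup
  have hyoung := young S R hS (τ k) (lam k) hτk hlk (hPD k) (yp - zb) (a - b)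
  have hcomm : (yp - zb) ⬝ᵥ (a - b) = a ⬝ᵥ yp - a ⬝ᵥ zb - b ⬝ᵥ yp + b ⬝ᵥ zb := by
    rw [dotProduct_comm]
    simp only [sub_dotProduct, dotProduct_sub]
    ring
  rw [hcomm] at hyoung
  have hqneg : (yp - zb) ⬝ᵥ S *ᵥ (yp - zb) = (zb - yp) ⬝ᵥ S *ᵥ (zb - yp) := by
    rw [show yp - zb = -(zb - yp) from (neg_sub zb yp).symm, sq_neg]
  rw [hqneg] at hyoung
  -- Step 5: assemble
  have hq1 : 0 ≤ 1/(2*τ k) * ((yp - yb) ⬝ᵥ S *ᵥ (yp - yb)) :=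
    mul_nonneg (by positivity) (hS.posSemidef.dotProduct_mulVec_nonneg _)
  have hLag : Lag f g A xp ystar - Lag f g A xstar yp
      = f xp + b ⬝ᵥ ystar - g ystar - f xstar - cc ⬝ᵥ yp + g yp := by
    simp only [Lag, ← hb, ← hcc]
    ring
  rw [hLag]
  linarith [hF, h2bil, hP1, hstar, hyoung, hq1]

end MEB

set_option maxHeartbeats 1000000

/-- Lemma th3.1: main ergodic bound. -/
theorem main_ergodic_bound {n m : ℕ}
    (f : (Fin n → ℝ) → ℝ) (g : (Fin m → ℝ) → ℝ)
    (hf : ConvexOn ℝ Set.univ f) (hg : ConvexOn ℝ Set.univ g)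
    (A : Matrix (Fin m) (Fin n) ℝ)
    (S R : Matrix (Fin m) (Fin m) ℝ) (hS : S.PosDef) (hR : R.PosDef)
    (τ lam : ℕ → ℝ) (hτpos : ∀ k, 0 < τ k) (hlampos : ∀ k, 0 < lam k)
    (hτmono : Monotone τ) (hlammono : Monotone lam)
    (hPD : ∀ k, (R - (τ k * lam k) • S⁻¹).PosDef)
    (ε δ : ℕ → ℝ) (hεnn : ∀ k, 0 ≤ ε k) (hδnn : ∀ k, 0 ≤ δ k)
    (xseq : ℕ → Fin n → ℝ) (yseq ybar : ℕ → Fin m → ℝ)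
    (hi : ∀ k, ∀ y, g y ≥ g (yseq (k+1)) +
        ((1 / τ k) • S.mulVec (ybar k - yseq (k+1)) + A.mulVec (xseq k)) ⬝ᵥ
          (y - yseq (k+1)) - ε (k+1) / 2)
    (hii : ∀ k, ∀ x, f x + A.mulVec x ⬝ᵥ yseq (k+1)
        ≥ f (xseq (k+1)) + A.mulVec (xseq (k+1)) ⬝ᵥ yseq (k+1)
          + ((1 / lam k) • (Aᵀ * R * A).mulVec (xseq k - xseq (k+1))) ⬝ᵥ
              (x - xseq (k+1)) - δ (k+1))
    (hiii : ∀ k, ∀ y, g y - A.mulVec (xseq (k+1)) ⬝ᵥ y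
          + (1 / (2 * τ k)) * sqnorm S (y - ybar k)
        ≥ g (ybar (k+1)) - A.mulVec (xseq (k+1)) ⬝ᵥ ybar (k+1)
          + (1 / (2 * τ k)) * sqnorm S (ybar (k+1) - ybar k) - ε (k+1) / 2)
    (xstar : Fin n → ℝ) (ystar : Fin m → ℝ)
    (hsaddle : IsSaddle f g A xstar ystar) :
    ∀ N : ℕ, 1 ≤ N →
      Lag f g A ((N : ℝ)⁻¹ • ∑ k ∈ Finset.range N, xseq (k+1)) ystar
          - Lag f g A xstar ((N : ℝ)⁻¹ • ∑ k ∈ Finset.range N, yseq (k+1))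
        ≤ (1 / (2 * N * τ N)) *
            (Real.sqrt (τ N / τ 0) * mnorm S (ystar - ybar 0)
              + Real.sqrt (τ N / lam 0) * mnorm R (A.mulVec (xstar - xseq 0))
              + 2 * (τ N * ∑ j ∈ Finset.range N, Real.sqrt (ε (j+1) / τ j))
              + Real.sqrt (2 * (τ N * ∑ j ∈ Finset.range N, (2 * ε (j+1) + δ (j+1))))) ^ 2 := by
  intro N hN
  have hNpos : (0:ℝ) < (N:ℝ) := by exact_mod_cast hN
  have hτN := hτpos N
  have hτ0 := hτpos 0
  have hl0 := hlampos 0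
  -- basic sequences
  set v : ℕ → ℝ := fun j => (ystar - ybar j) ⬝ᵥ S *ᵥ (ystar - ybar j) with hv
  set w : ℕ → ℝ := fun j =>
    (A *ᵥ xstar - A *ᵥ xseq j) ⬝ᵥ R *ᵥ (A *ᵥ xstar - A *ᵥ xseq j) with hw
  set u : ℕ → ℝ := fun j => Real.sqrt (v j) with hu
  have hv0 : ∀ j, 0 ≤ v j := fun j => hS.posSemidef.dotProduct_mulVec_nonneg _
  have hw0 : ∀ j, 0 ≤ w j := fun j => hR.posSemidef.dotProduct_mulVec_nonneg _
  have hu0 : ∀ j, 0 ≤ u j := fun j => Real.sqrt_nonneg _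
  have husq : ∀ j, u j ^ 2 = v j := fun j => Real.sq_sqrt (hv0 j)
  -- per-iteration bound
  have hper : ∀ k, Lag f g A (xseq (k+1)) ystar - Lag f g A xstar (yseq (k+1))
      ≤ 1/(2*τ k) * (v k - v (k+1)) + 1/(2*lam k) * (w k - w (k+1))
        + Real.sqrt (ε (k+1)/τ k) * u (k+1) + (ε (k+1) + δ (k+1)) := by
    intro k
    have := MEB.periter f g hg A S R hS hR τ lam hτpos hlampos hPD ε δ hεnn
      xseq yseq ybar hi hii hiii xstar ystar k
    simp only [hv, hw, hu]
    linarith [this]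
  have hGnn : ∀ k, 0 ≤ Lag f g A (xseq (k+1)) ystar - Lag f g A xstar (yseq (k+1)) := by
    intro k
    have h1 := (hsaddle (xseq (k+1)) (yseq (k+1))).1
    have h2 := (hsaddle (xseq (k+1)) (yseq (k+1))).2
    linarith
  -- Abel bounds
  have hc_anti : ∀ j k : ℕ, j ≤ k → (fun k => 1/(2*τ k)) k ≤ (fun k => 1/(2*τ k)) j := by
    intro j k hjk
    simp only
    have h1 := hτmono hjk
    have h2 := hτpos j
    gcongr
  have hd_anti : ∀ j k : ℕ, j ≤ k → (fun k => 1/(2*lam k)) k ≤ (fun k => 1/(2*lam k)) j := by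
    intro j k hjk
    simp only
    have h1 := hlammono hjk
    have h2 := hlampos j
    gcongr
  have habel1 := MEB.abel_bound (fun k => 1/(2*τ k)) v hc_anti hv0
  have habel2 := MEB.abel_bound (fun k => 1/(2*lam k)) w hd_anti hw0
  -- key partial-sum estimate: for every M, the retained dual term is controlled
  have hkey : ∀ M : ℕ, 1/(2*τ M) * v (M+1)
      ≤ 1/(2*τ 0) * v 0 + 1/(2*lam 0) * w 0
        + ∑ k ∈ Finset.range (M+1), (Real.sqrt (ε (k+1)/τ k) * u (k+1) + (ε (k+1) + δ (k+1))) := by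
    intro M
    have hsumG : (0:ℝ) ≤ ∑ k ∈ Finset.range (M+1),
        (Lag f g A (xseq (k+1)) ystar - Lag f g A xstar (yseq (k+1))) :=
      Finset.sum_nonneg (fun k _ => hGnn k)
    have hsum_le : ∑ k ∈ Finset.range (M+1),
        (Lag f g A (xseq (k+1)) ystar - Lag f g A xstar (yseq (k+1)))
        ≤ ∑ k ∈ Finset.range (M+1),
          (1/(2*τ k) * (v k - v (k+1)) + 1/(2*lam k) * (w k - w (k+1))
            + Real.sqrt (ε (k+1)/τ k) * u (k+1) + (ε (k+1) + δ (k+1))) :=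
      Finset.sum_le_sum (fun k _ => hper k)
    have hsplit : ∑ k ∈ Finset.range (M+1),
          (1/(2*τ k) * (v k - v (k+1)) + 1/(2*lam k) * (w k - w (k+1))
            + Real.sqrt (ε (k+1)/τ k) * u (k+1) + (ε (k+1) + δ (k+1)))
        = (∑ k ∈ Finset.range (M+1), 1/(2*τ k) * (v k - v (k+1)))
          + (∑ k ∈ Finset.range (M+1), 1/(2*lam k) * (w k - w (k+1)))
          + ∑ k ∈ Finset.range (M+1),
              (Real.sqrt (ε (k+1)/τ k) * u (k+1) + (ε (k+1) + δ (k+1))) := by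
      rw [← Finset.sum_add_distrib, ← Finset.sum_add_distrib]
      apply Finset.sum_congr rfl
      intro k _
      ring
    have h1 := habel1 M
    have h2 := habel2 M
    have h3 : 0 ≤ 1/(2*lam M) * w (M+1) :=
      mul_nonneg (by have := hlampos M; positivity) (hw0 _)
    linarith [hsumG, hsum_le, hsplit.le, hsplit.ge, h1, h2, h3]
  -- recursion setup
  set lamb : ℕ → ℝ := fun j => 2*τ N * Real.sqrt (ε j / τ (j-1)) with hlamb
  have hlamb0 : ∀ j, 0 ≤ lamb j := by
    intro j
    simp only [hlamb]
    positivity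
  set Stil : ℝ := 2*τ N * (1/(2*τ 0) * v 0 + 1/(2*lam 0) * w 0
      + ∑ k ∈ Finset.range N, (ε (k+1) + δ (k+1))) with hStil
  have hEds0 : (0:ℝ) ≤ ∑ k ∈ Finset.range N, (ε (k+1) + δ (k+1)) :=
    Finset.sum_nonneg (fun k _ => by linarith [hεnn (k+1), hδnn (k+1)])
  have hStil0 : 0 ≤ Stil := by
    rw [hStil]
    have := hv0 0
    have := hw0 0
    positivity
  have hrec : ∀ M, M ≤ N → u M ^ 2 ≤ Stil + ∑ k ∈ Finset.range M, lamb (k+1) * u (k+1) := by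
    intro M hMN
    cases M with
    | zero =>
        rw [husq 0]
        have hτ0N : τ 0 ≤ τ N := hτmono (Nat.zero_le N)
        have h1 : v 0 ≤ 2*τ N * (1/(2*τ 0) * v 0) := by
          rw [show 2*τ N * (1/(2*τ 0) * v 0) = (τ N / τ 0) * v 0 by field_simp]
          nlinarith [hv0 0, (one_le_div hτ0).2 hτ0N]
        have h2 : 0 ≤ 2*τ N * (1/(2*lam 0) * w 0) := by
          have := hw0 0
          positivity
        simp only [Finset.range_zero, Finset.sum_empty, add_zero]
        rw [hStil]
        nlinarith [hEds0, hτN]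
    | succ j =>
        show u (j+1)^2 ≤ Stil + ∑ k ∈ Finset.range (j+1), lamb (k+1) * u (k+1)
        have hkj := hkey j
        set X : ℝ := 1/(2*τ 0) * v 0 + 1/(2*lam 0) * w 0
          + ∑ k ∈ Finset.range (j+1), (Real.sqrt (ε (k+1)/τ k) * u (k+1) + (ε (k+1) + δ (k+1)))
          with hX
        have hX0 : 0 ≤ X := by
          rw [hX]
          have h1 : (0:ℝ) ≤ ∑ k ∈ Finset.range (j+1),
              (Real.sqrt (ε (k+1)/τ k) * u (k+1) + (ε (k+1) + δ (k+1))) :=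
            Finset.sum_nonneg (fun k _ => by
              have := hu0 (k+1)
              have := hεnn (k+1)
              have := hδnn (k+1)
              positivity)
          have := hv0 0
          have := hw0 0
          positivity
        have hτj := hτpos j
        have hτjN : τ j ≤ τ N := hτmono (by omega)
        have hv1 : v (j+1) ≤ 2*τ j * X := by
          have : v (j+1) = 2*τ j * (1/(2*τ j) * v (j+1)) := by field_simp
          rw [this]
          nlinarith [hkj]
        have hv2 : 2*τ j * X ≤ 2*τ N * X := by nlinarith
        -- expand 2τN * X
        have hexp : 2*τ N * X = 2*τ N * (1/(2*τ 0) * v 0) + 2*τ N * (1/(2*lam 0) * w 0)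
            + (∑ k ∈ Finset.range (j+1), lamb (k+1) * u (k+1))
            + 2*τ N * (∑ k ∈ Finset.range (j+1), (ε (k+1) + δ (k+1))) := by
          rw [hX]
          have hsum : ∑ k ∈ Finset.range (j+1), lamb (k+1) * u (k+1)
              = 2*τ N * ∑ k ∈ Finset.range (j+1), (Real.sqrt (ε (k+1)/τ k) * u (k+1)) := by
            rw [Finset.mul_sum]
            apply Finset.sum_congr rfl
            intro k _
            simp only [hlamb, Nat.add_sub_cancel]
            ring
          rw [Finset.sum_add_distrib, hsum]
          ring
        have hEps : ∑ k ∈ Finset.range (j+1), (ε (k+1) + δ (k+1))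
            ≤ ∑ k ∈ Finset.range N, (ε (k+1) + δ (k+1)) := by
          apply Finset.sum_le_sum_of_subset_of_nonneg (Finset.range_subset_range.2 hMN)
          intro i _ _
          linarith [hεnn (i+1), hδnn (i+1)]
        have hmul := mul_le_mul_of_nonneg_left hEps (by positivity : (0:ℝ) ≤ 2*τ N)
        calc u (j+1)^2 = v (j+1) := husq _
          _ ≤ 2*τ j * X := hv1
          _ ≤ 2*τ N * X := hv2
          _ = 2*τ N * (1/(2*τ 0) * v 0) + 2*τ N * (1/(2*lam 0) * w 0)
              + (∑ k ∈ Finset.range (j+1), lamb (k+1) * u (k+1))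
              + 2*τ N * (∑ k ∈ Finset.range (j+1), (ε (k+1) + δ (k+1))) := hexp
          _ ≤ 2*τ N * (1/(2*τ 0) * v 0) + 2*τ N * (1/(2*lam 0) * w 0)
              + (∑ k ∈ Finset.range (j+1), lamb (k+1) * u (k+1))
              + 2*τ N * (∑ k ∈ Finset.range N, (ε (k+1) + δ (k+1))) := by
                linarith [hmul]
          _ = Stil + ∑ k ∈ Finset.range (j+1), lamb (k+1) * u (k+1) := by
                rw [hStil]; ring
  have hbound := MEB.recursion_bound u lamb hu0 hlamb0 Stil hStil0 N hrec
  set Λ : ℝ := ∑ k ∈ Finset.range N, lamb (k+1) with hΛ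
  have hΛ0 : 0 ≤ Λ := Finset.sum_nonneg (fun k _ => hlamb0 _)
  set B : ℝ := Λ + Real.sqrt Stil with hB
  have hB0 : 0 ≤ B := by
    rw [hB]
    positivity
  -- sum bound over range N
  have hN1 : N - 1 + 1 = N := Nat.succ_pred_eq_of_pos hN
  have hkeyN := hkey (N-1)
  rw [hN1] at hkeyN
  have hsumG_le : ∑ k ∈ Finset.range N,
      (Lag f g A (xseq (k+1)) ystar - Lag f g A xstar (yseq (k+1)))
      ≤ 1/(2*τ 0) * v 0 + 1/(2*lam 0) * w 0
        + ∑ k ∈ Finset.range N,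
            (Real.sqrt (ε (k+1)/τ k) * u (k+1) + (ε (k+1) + δ (k+1))) := by
    have hsum_le : ∑ k ∈ Finset.range N,
        (Lag f g A (xseq (k+1)) ystar - Lag f g A xstar (yseq (k+1)))
        ≤ ∑ k ∈ Finset.range N,
          (1/(2*τ k) * (v k - v (k+1)) + 1/(2*lam k) * (w k - w (k+1))
            + Real.sqrt (ε (k+1)/τ k) * u (k+1) + (ε (k+1) + δ (k+1))) :=
      Finset.sum_le_sum (fun k _ => hper k)
    have hsplit : ∑ k ∈ Finset.range N,
          (1/(2*τ k) * (v k - v (k+1)) + 1/(2*lam k) * (w k - w (k+1))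
            + Real.sqrt (ε (k+1)/τ k) * u (k+1) + (ε (k+1) + δ (k+1)))
        = (∑ k ∈ Finset.range N, 1/(2*τ k) * (v k - v (k+1)))
          + (∑ k ∈ Finset.range N, 1/(2*lam k) * (w k - w (k+1)))
          + ∑ k ∈ Finset.range N,
              (Real.sqrt (ε (k+1)/τ k) * u (k+1) + (ε (k+1) + δ (k+1))) := by
      rw [← Finset.sum_add_distrib, ← Finset.sum_add_distrib]
      apply Finset.sum_congr rfl
      intro k _
      ring
    have h1 := habel1 (N-1)
    have h2 := habel2 (N-1)
    rw [hN1] at h1 h2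
    have h3 : 0 ≤ 1/(2*lam (N-1)) * w N :=
      mul_nonneg (by have := hlampos (N-1); positivity) (hw0 _)
    have h4 : 0 ≤ 1/(2*τ (N-1)) * v N :=
      mul_nonneg (by have := hτpos (N-1); positivity) (hv0 _)
    linarith [hsum_le, hsplit.le, hsplit.ge, h1, h2, h3, h4]
  -- bound the u-weighted sum
  have hsumU : ∑ k ∈ Finset.range N, (Real.sqrt (ε (k+1)/τ k) * u (k+1))
      ≤ (∑ k ∈ Finset.range N, Real.sqrt (ε (k+1)/τ k)) * B := by
    rw [Finset.sum_mul]
    apply Finset.sum_le_sum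
    intro k hk
    have hkN : k + 1 ≤ N := Finset.mem_range.1 hk
    exact mul_le_mul_of_nonneg_left (hbound (k+1) hkN) (Real.sqrt_nonneg _)
  -- Λ equals the theorem's 2(τ_N Σ √) term
  have hΛeq : Λ = 2 * (τ N * ∑ j ∈ Finset.range N, Real.sqrt (ε (j+1) / τ j)) := by
    rw [hΛ, Finset.mul_sum, Finset.mul_sum]
    apply Finset.sum_congr rfl
    intro k _
    simp only [hlamb, Nat.add_sub_cancel]
    ring
  -- names for the four terms
  set PP : ℝ := Real.sqrt (τ N / τ 0) * mnorm S (ystar - ybar 0) with hPP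
  set QQ : ℝ := Real.sqrt (τ N / lam 0) * mnorm R (A.mulVec (xstar - xseq 0)) with hQQ
  set RRR : ℝ := Real.sqrt (2 * (τ N * ∑ j ∈ Finset.range N, (2 * ε (j+1) + δ (j+1)))) with hRRR
  have hPP0 : 0 ≤ PP := by rw [hPP, mnorm]; positivity
  have hQQ0 : 0 ≤ QQ := by rw [hQQ, mnorm]; positivity
  have hRRR0 : 0 ≤ RRR := Real.sqrt_nonneg _
  have hPPsq : PP^2 = (τ N / τ 0) * v 0 := by
    rw [hPP, mul_pow, mnorm, Real.sq_sqrt (by positivity : (0:ℝ) ≤ τ N / τ 0),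
      Real.sq_sqrt (hv0 0)]
  have hQQsq : QQ^2 = (τ N / lam 0) * w 0 := by
    rw [hQQ, mul_pow, mnorm, Real.sq_sqrt (by positivity : (0:ℝ) ≤ τ N / lam 0)]
    have harg : A.mulVec (xstar - xseq 0) = A *ᵥ xstar - A *ᵥ xseq 0 := Matrix.mulVec_sub A _ _
    have hnn : (0:ℝ) ≤ (A *ᵥ xstar - A *ᵥ xseq 0) ⬝ᵥ R *ᵥ (A *ᵥ xstar - A *ᵥ xseq 0) :=
      hR.posSemidef.dotProduct_mulVec_nonneg _
    rw [harg, Real.sq_sqrt hnn]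
  have hRRRsq : RRR^2 = 2 * (τ N * ∑ j ∈ Finset.range N, (2 * ε (j+1) + δ (j+1))) := by
    have hnn : (0:ℝ) ≤ 2 * (τ N * ∑ j ∈ Finset.range N, (2 * ε (j+1) + δ (j+1))) := by
      have : (0:ℝ) ≤ ∑ j ∈ Finset.range N, (2 * ε (j+1) + δ (j+1)) :=
        Finset.sum_nonneg (fun j _ => by linarith [hεnn (j+1), hδnn (j+1)])
      positivity
    rw [hRRR, Real.sq_sqrt hnn]
  have hStil_le : Stil ≤ PP^2 + QQ^2 + RRR^2 := by
    rw [hStil, hPPsq, hQQsq, hRRRsq]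
    have hsum_le2 : ∑ k ∈ Finset.range N, (ε (k+1) + δ (k+1))
        ≤ ∑ j ∈ Finset.range N, (2 * ε (j+1) + δ (j+1)) :=
      Finset.sum_le_sum (fun j _ => by linarith [hεnn (j+1)])
    have e1 : 2*τ N * (1/(2*τ 0) * v 0) = (τ N / τ 0) * v 0 := by field_simp
    have e2 : 2*τ N * (1/(2*lam 0) * w 0) = (τ N / lam 0) * w 0 := by field_simp
    nlinarith [hτN, e1, e2]
  have hsqrtStil : Real.sqrt Stil ≤ PP + QQ + RRR := by
    have h1 : Stil ≤ (PP + QQ + RRR)^2 := by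
      nlinarith [mul_nonneg hPP0 hQQ0, mul_nonneg hPP0 hRRR0, mul_nonneg hQQ0 hRRR0]
    calc Real.sqrt Stil ≤ Real.sqrt ((PP + QQ + RRR)^2) := Real.sqrt_le_sqrt h1
      _ = PP + QQ + RRR := Real.sqrt_sq (by linarith)
  -- master bound on the sum
  have hmaster : 2*τ N * (∑ k ∈ Finset.range N,
      (Lag f g A (xseq (k+1)) ystar - Lag f g A xstar (yseq (k+1))))
      ≤ (PP + QQ + Λ + RRR)^2 := by
    have hsplitE : ∑ k ∈ Finset.range N,
        (Real.sqrt (ε (k+1)/τ k) * u (k+1) + (ε (k+1) + δ (k+1)))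
        = (∑ k ∈ Finset.range N, Real.sqrt (ε (k+1)/τ k) * u (k+1))
          + ∑ k ∈ Finset.range N, (ε (k+1) + δ (k+1)) := Finset.sum_add_distrib
    have h2τΛ : 2*τ N * (∑ k ∈ Finset.range N, Real.sqrt (ε (k+1)/τ k)) = Λ := by
      rw [hΛ, Finset.mul_sum]
      apply Finset.sum_congr rfl
      intro k _
      simp only [hlamb, Nat.add_sub_cancel]
    have hstep1 : 2*τ N * (∑ k ∈ Finset.range N,
        (Lag f g A (xseq (k+1)) ystar - Lag f g A xstar (yseq (k+1))))
        ≤ Stil + Λ * B := by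
      have hS1 : ∑ k ∈ Finset.range N,
          (Lag f g A (xseq (k+1)) ystar - Lag f g A xstar (yseq (k+1)))
          ≤ 1/(2*τ 0) * v 0 + 1/(2*lam 0) * w 0
            + (∑ k ∈ Finset.range N, Real.sqrt (ε (k+1)/τ k)) * B
            + ∑ k ∈ Finset.range N, (ε (k+1) + δ (k+1)) := by
        linarith [hsumG_le, hsplitE.le, hsumU]
      have hS2 : 2*τ N * (1/(2*τ 0) * v 0 + 1/(2*lam 0) * w 0
            + (∑ k ∈ Finset.range N, Real.sqrt (ε (k+1)/τ k)) * B
            + ∑ k ∈ Finset.range N, (ε (k+1) + δ (k+1)))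
          = Stil + Λ * B := by
        rw [hStil, ← h2τΛ]
        ring
      nlinarith [hS1, hτN]
    have hfinal : Stil + Λ * B ≤ (PP + QQ + Λ + RRR)^2 := by
      rw [hB]
      nlinarith [hsqrtStil, hStil_le, hΛ0, hPP0, hQQ0, hRRR0, Real.sqrt_nonneg Stil,
        Real.sq_sqrt hStil0, mul_nonneg hPP0 hQQ0, mul_nonneg hPP0 hRRR0,
        mul_nonneg hQQ0 hRRR0, mul_nonneg hΛ0 (add_nonneg (add_nonneg hPP0 hQQ0) hRRR0)]
    linarith
  -- Jensen / ergodic step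
  have hNne : ((N:ℝ)) ≠ 0 := ne_of_gt hNpos
  have hwsum : ∑ _k ∈ Finset.range N, (N:ℝ)⁻¹ = 1 := by
    rw [Finset.sum_const, Finset.card_range, nsmul_eq_mul]
    field_simp
  have hJf : f ((N : ℝ)⁻¹ • ∑ k ∈ Finset.range N, xseq (k+1))
      ≤ (N:ℝ)⁻¹ * ∑ k ∈ Finset.range N, f (xseq (k+1)) := by
    rw [Finset.smul_sum, Finset.mul_sum]
    have := hf.map_sum_le (t := Finset.range N) (w := fun _ => (N:ℝ)⁻¹)
      (p := fun k => xseq (k+1)) (fun i _ => by positivity) hwsum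
      (fun i _ => Set.mem_univ _)
    simpa [smul_eq_mul] using this
  have hJg : g ((N : ℝ)⁻¹ • ∑ k ∈ Finset.range N, yseq (k+1))
      ≤ (N:ℝ)⁻¹ * ∑ k ∈ Finset.range N, g (yseq (k+1)) := by
    rw [Finset.smul_sum, Finset.mul_sum]
    have := hg.map_sum_le (t := Finset.range N) (w := fun _ => (N:ℝ)⁻¹)
      (p := fun k => yseq (k+1)) (fun i _ => by positivity) hwsum
      (fun i _ => Set.mem_univ _)
    simpa [smul_eq_mul] using this
  have hlin1 : A.mulVec ((N : ℝ)⁻¹ • ∑ k ∈ Finset.range N, xseq (k+1)) ⬝ᵥ ystar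
      = (N:ℝ)⁻¹ * ∑ k ∈ Finset.range N, (A *ᵥ xseq (k+1)) ⬝ᵥ ystar := by
    rw [Matrix.mulVec_smul, smul_dotProduct, smul_eq_mul, MEB.mulVec_sum',
      MEB.dot_sum_left]
  have hlin2 : A.mulVec xstar ⬝ᵥ ((N : ℝ)⁻¹ • ∑ k ∈ Finset.range N, yseq (k+1))
      = (N:ℝ)⁻¹ * ∑ k ∈ Finset.range N, (A *ᵥ xstar) ⬝ᵥ yseq (k+1) := by
    rw [dotProduct_smul, smul_eq_mul, MEB.dot_sum_right]
  have hsumGexp : ∑ k ∈ Finset.range N,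
      (Lag f g A (xseq (k+1)) ystar - Lag f g A xstar (yseq (k+1)))
      = (∑ k ∈ Finset.range N, f (xseq (k+1)))
        + (∑ k ∈ Finset.range N, (A *ᵥ xseq (k+1)) ⬝ᵥ ystar)
        - N * g ystar - N * f xstar
        - (∑ k ∈ Finset.range N, (A *ᵥ xstar) ⬝ᵥ yseq (k+1))
        + ∑ k ∈ Finset.range N, g (yseq (k+1)) := by
    have hterm : ∀ k, Lag f g A (xseq (k+1)) ystar - Lag f g A xstar (yseq (k+1))
        = f (xseq (k+1)) + (A *ᵥ xseq (k+1)) ⬝ᵥ ystar - g ystar - f xstar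
          - (A *ᵥ xstar) ⬝ᵥ yseq (k+1) + g (yseq (k+1)) := by
      intro k
      simp only [Lag]
      ring
    rw [Finset.sum_congr rfl (fun k _ => hterm k)]
    simp only [Finset.sum_add_distrib, Finset.sum_sub_distrib, Finset.sum_const,
      Finset.card_range, nsmul_eq_mul]
  -- final arithmetic
  set SG : ℝ := ∑ k ∈ Finset.range N,
      (Lag f g A (xseq (k+1)) ystar - Lag f g A xstar (yseq (k+1))) with hSG
  have hgap : Lag f g A ((N : ℝ)⁻¹ • ∑ k ∈ Finset.range N, xseq (k+1)) ystar
      - Lag f g A xstar ((N : ℝ)⁻¹ • ∑ k ∈ Finset.range N, yseq (k+1))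
      ≤ (N:ℝ)⁻¹ * SG := by
    have hexp : (N:ℝ)⁻¹ * SG = (N:ℝ)⁻¹ * (∑ k ∈ Finset.range N, f (xseq (k+1)))
        + (N:ℝ)⁻¹ * (∑ k ∈ Finset.range N, (A *ᵥ xseq (k+1)) ⬝ᵥ ystar)
        - g ystar - f xstar
        - (N:ℝ)⁻¹ * (∑ k ∈ Finset.range N, (A *ᵥ xstar) ⬝ᵥ yseq (k+1))
        + (N:ℝ)⁻¹ * ∑ k ∈ Finset.range N, g (yseq (k+1)) := by
      rw [hsumGexp]
      field_simp
    simp only [Lag]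
    rw [hlin1, hlin2]
    linarith [hJf, hJg, hexp.le, hexp.ge]
  have hSGnn : 0 ≤ SG := Finset.sum_nonneg (fun k _ => hGnn k)
  rw [← hΛeq]
  have h2NτN : (0:ℝ) < 2 * (N:ℝ) * τ N := by positivity
  have hchain : Lag f g A ((N : ℝ)⁻¹ • ∑ k ∈ Finset.range N, xseq (k+1)) ystar
      - Lag f g A xstar ((N : ℝ)⁻¹ • ∑ k ∈ Finset.range N, yseq (k+1))
      ≤ (PP + QQ + Λ + RRR)^2 / (2 * (N:ℝ) * τ N) := by
    rw [le_div_iff₀ h2NτN]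
    have h1 : ((N:ℝ)⁻¹ * SG) * (2 * (N:ℝ) * τ N) = 2*τ N * SG := by
      field_simp
    have hstep := mul_le_mul_of_nonneg_right hgap (le_of_lt h2NτN)
    linarith [hstep, h1.le, h1.ge, hmaster]
  calc Lag f g A ((N : ℝ)⁻¹ • ∑ k ∈ Finset.range N, xseq (k+1)) ystar
      - Lag f g A xstar ((N : ℝ)⁻¹ • ∑ k ∈ Finset.range N, yseq (k+1))
      ≤ (PP + QQ + Λ + RRR)^2 / (2 * (N:ℝ) * τ N) := hchain
    _ = 1 / (2 * (N:ℝ) * τ N) * (PP + QQ + Λ + RRR)^2 := by ring
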